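/- Let $(\Sigma, \mu)$ be a finite probability space and $n \in \mathbb{N}$. For $T \subseteq [n]$ let $E_T = \{x \in \Sigma^n : x_i = x_j \text{ for all } i, j \in T\}$. Let $S \subseteq [n]$ and let $1 \le k \le \sqrt{|S|}$ be an integer. Let $\nu$ be the distribution obtained by sampling a uniformly random $T \subseteq S$ with $|T| = k$ and then sampling $x \sim \mu^{\otimes n} | E_T$. Then $\|\nu - \mu^{\otimes n}\|_1 \le \frac{C k}{\sqrt{|S|}}$, where $C$ is a constant depending only on $\mu$. -/

import Mathlib

open Finset

lemma aux_sum_prod {n : ℕ} {Sig : Type*} [Fintype Sig] (g : Fin n → Sig → ℝ) :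
    ∑ y : Fin n → Sig, ∏ i, g i (y i) = ∏ i, ∑ a, g i a := by
  rw [Finset.prod_univ_sum, Fintype.piFinset_univ]

open Classical in
lemma aux_pinned {n : ℕ} {Sig : Type*} [Fintype Sig] (μ : Sig → ℝ)
    (hμ1 : ∑ a, μ a = 1) (T T' : Finset (Fin n)) (hd : Disjoint T T') (a b : Sig) :
    ∑ y : Fin n → Sig,
      (if ∀ i ∈ T, y i = a then (1:ℝ) else 0) *
        ((if ∀ i ∈ T', y i = b then (1:ℝ) else 0) * ∏ i, μ (y i))
      = μ a ^ T.card * μ b ^ T'.card := by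
  classical
  have key : ∀ y : Fin n → Sig,
      (if ∀ i ∈ T, y i = a then (1:ℝ) else 0) *
        ((if ∀ i ∈ T', y i = b then (1:ℝ) else 0) * ∏ i, μ (y i))
      = ∏ i, (if i ∈ T then (if y i = a then μ (y i) else 0)
              else if i ∈ T' then (if y i = b then μ (y i) else 0) else μ (y i)) := by
    intro y
    by_cases h1 : ∀ i ∈ T, y i = a
    · by_cases h2 : ∀ i ∈ T', y i = b
      · rw [if_pos h1, if_pos h2, one_mul, one_mul]
        refine Finset.prod_congr rfl fun i _ => ?_
        by_cases hiT : i ∈ T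
        · rw [if_pos hiT, if_pos (h1 i hiT)]
        · by_cases hiT' : i ∈ T'
          · rw [if_neg hiT, if_pos hiT', if_pos (h2 i hiT')]
          · rw [if_neg hiT, if_neg hiT']
      · push_neg at h2
        obtain ⟨i0, hi0, hne⟩ := h2
        rw [if_pos h1, if_neg (by push_neg; exact ⟨i0, hi0, hne⟩), zero_mul, one_mul]
        refine (Finset.prod_eq_zero (Finset.mem_univ i0) ?_).symm
        rw [if_neg (Finset.disjoint_right.mp hd hi0), if_pos hi0, if_neg hne]
    · push_neg at h1
      obtain ⟨i0, hi0, hne⟩ := h1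
      rw [if_neg (by push_neg; exact ⟨i0, hi0, hne⟩), zero_mul]
      refine (Finset.prod_eq_zero (Finset.mem_univ i0) ?_).symm
      rw [if_pos hi0, if_neg hne]
  rw [Finset.sum_congr rfl fun y _ => key y,
    aux_sum_prod (fun i c => if i ∈ T then (if c = a then μ c else 0)
      else if i ∈ T' then (if c = b then μ c else 0) else μ c)]
  have hval : ∀ i : Fin n, (∑ c, (if i ∈ T then (if c = a then μ c else 0)
      else if i ∈ T' then (if c = b then μ c else 0) else μ c))
      = if i ∈ T then μ a else if i ∈ T' then μ b else 1 := by
    intro i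
    by_cases hiT : i ∈ T
    · simp [hiT, Finset.sum_ite_eq']
    · by_cases hiT' : i ∈ T'
      · simp [hiT, hiT', Finset.sum_ite_eq']
      · simp [hiT, hiT', hμ1]
  rw [Finset.prod_congr rfl fun i _ => hval i]
  rw [← Finset.prod_subset (Finset.subset_univ (T ∪ T'))
    (fun i _ hi => by
      rw [if_neg (fun h => hi (Finset.mem_union_left _ h)),
        if_neg (fun h => hi (Finset.mem_union_right _ h))])]
  rw [Finset.prod_union hd]
  congr 1
  · rw [← Finset.prod_const]
    exact Finset.prod_congr rfl fun i hi => by rw [if_pos hi]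
  · rw [← Finset.prod_const]
    refine Finset.prod_congr rfl fun i hi => by
      rw [if_neg (Finset.disjoint_right.mp hd hi), if_pos hi]

open Classical in
lemma aux_single {n : ℕ} {Sig : Type*} [Fintype Sig] (μ : Sig → ℝ) (hμ1 : ∑ a, μ a = 1)
    (T : Finset (Fin n)) (a : Sig) :
    ∑ y : Fin n → Sig, (if ∀ i ∈ T, y i = a then (1:ℝ) else 0) * ∏ i, μ (y i)
      = μ a ^ T.card := by
  simpa using aux_pinned μ hμ1 T ∅ (Finset.disjoint_empty_right T) a a

open Classical in
lemma aux_ind {n : ℕ} {Sig : Type*} [Fintype Sig] (T : Finset (Fin n))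
    (hT : T.Nonempty) (x : Fin n → Sig) :
    (if ∀ i ∈ T, ∀ j ∈ T, x i = x j then (1:ℝ) else 0)
      = ∑ a, if ∀ i ∈ T, x i = a then (1:ℝ) else 0 := by
  classical
  obtain ⟨i0, hi0⟩ := hT
  by_cases h : ∀ i ∈ T, ∀ j ∈ T, x i = x j
  · rw [if_pos h]
    have : ∀ a : Sig, (if ∀ i ∈ T, x i = a then (1:ℝ) else 0)
        = if x i0 = a then (1:ℝ) else 0 := by
      intro a
      by_cases ha : x i0 = a
      · rw [if_pos ha, if_pos (fun i hi => (h i hi i0 hi0).trans ha)]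
      · rw [if_neg ha, if_neg (fun hall => ha (hall i0 hi0))]
    rw [Finset.sum_congr rfl fun a _ => this a]
    simp
  · rw [if_neg h]
    symm
    refine Finset.sum_eq_zero fun a _ => ?_
    refine if_neg fun hall => h fun i hi j hj => ?_
    rw [hall i hi, hall j hj]

lemma aux_union {n : ℕ} {Sig : Type*} (T T' : Finset (Fin n))
    (h : (T ∩ T').Nonempty) (x : Fin n → Sig) :
    ((∀ i ∈ T, ∀ j ∈ T, x i = x j) ∧ (∀ i ∈ T', ∀ j ∈ T', x i = x j))
      ↔ (∀ i ∈ T ∪ T', ∀ j ∈ T ∪ T', x i = x j) := by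
  classical
  obtain ⟨i0, hi0⟩ := h
  rw [Finset.mem_inter] at hi0
  constructor
  · rintro ⟨h1, h2⟩ i hi j hj
    have key : ∀ i ∈ T ∪ T', x i = x i0 := by
      intro i hi
      rcases Finset.mem_union.mp hi with hi | hi
      · exact h1 i hi i0 hi0.1
      · exact h2 i hi i0 hi0.2
    rw [key i hi, key j hj]
  · intro h
    exact ⟨fun i hi j hj => h i (Finset.mem_union_left _ hi) j (Finset.mem_union_left _ hj),
      fun i hi j hj => h i (Finset.mem_union_right _ hi) j (Finset.mem_union_right _ hj)⟩

open Classical in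
lemma aux_count {α : Type*} [DecidableEq α] (S : Finset α) (k s : ℕ) (hsk : s ≤ k) :
    ∑ T ∈ S.powersetCard k, ∑ T' ∈ S.powersetCard k, ((T ∩ T').card.choose s)
      = (S.card.choose s) * ((S.card - s).choose (k - s))^2 := by
  classical
  have aux_card_superset : ∀ R : Finset α, R ⊆ S → R.card = s →
      ((S.powersetCard k).filter (fun T => R ⊆ T)).card
        = (S.card - s).choose (k - s) := by
    intro R hRS hRcard
    rw [← hRcard, ← Finset.card_sdiff_of_subset hRS, ← Finset.card_powersetCard (k - R.card) (S \ R)]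
    refine Finset.card_bij' (fun T _ => T \ R) (fun U _ => U ∪ R) ?_ ?_ ?_ ?_
    · intro T hT
      rw [Finset.mem_filter, Finset.mem_powersetCard] at hT
      rw [Finset.mem_powersetCard]
      exact ⟨Finset.sdiff_subset_sdiff hT.1.1 (le_refl _),
        by rw [Finset.card_sdiff_of_subset hT.2, hT.1.2]⟩
    · intro U hU
      rw [Finset.mem_powersetCard] at hU
      rw [Finset.mem_filter, Finset.mem_powersetCard]
      have hdisj : Disjoint U R := Finset.disjoint_of_subset_left hU.1 Finset.sdiff_disjoint
      have hcR : R.card ≤ k := by rw [hRcard]; exact hsk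
      refine ⟨⟨Finset.union_subset (hU.1.trans Finset.sdiff_subset) hRS, ?_⟩,
        Finset.subset_union_right⟩
      rw [Finset.card_union_of_disjoint hdisj, hU.2]
      have hRS' : R.card ≤ S.card := Finset.card_le_card hRS
      omega
    · intro T hT
      rw [Finset.mem_filter] at hT
      exact Finset.sdiff_union_of_subset hT.2
    · intro U hU
      rw [Finset.mem_powersetCard] at hU
      have hdisj : Disjoint U R := Finset.disjoint_of_subset_left hU.1 Finset.sdiff_disjoint
      exact Finset.union_sdiff_cancel_right hdisj
  have hchoose : ∀ T ∈ S.powersetCard k, ∀ T' ∈ S.powersetCard k,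
      (T ∩ T').card.choose s = ∑ R ∈ S.powersetCard s,
        (if R ⊆ T then 1 else 0) * (if R ⊆ T' then 1 else 0) := by
    intro T hT T' hT'
    rw [Finset.mem_powersetCard] at hT
    rw [← Finset.card_powersetCard s (T ∩ T')]
    have heq : (T ∩ T').powersetCard s = (S.powersetCard s).filter
        (fun R => R ⊆ T ∧ R ⊆ T') := by
      ext R
      simp only [Finset.mem_powersetCard, Finset.mem_filter, Finset.subset_inter_iff]
      constructor
      · rintro ⟨⟨h1, h2⟩, h3⟩; exact ⟨⟨h1.trans hT.1, h3⟩, h1, h2⟩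
      · rintro ⟨⟨_, h3⟩, h1, h2⟩; exact ⟨⟨h1, h2⟩, h3⟩
    rw [heq, Finset.card_filter]
    refine Finset.sum_congr rfl fun R _ => ?_
    by_cases h1 : R ⊆ T <;> by_cases h2 : R ⊆ T' <;> simp [h1, h2]
  rw [Finset.sum_congr rfl fun T hT => Finset.sum_congr rfl fun T' hT' => hchoose T hT T' hT']
  rw [Finset.sum_congr rfl fun T (_ : T ∈ S.powersetCard k) => Finset.sum_comm]
  rw [Finset.sum_comm]
  have hper : ∀ R ∈ S.powersetCard s,
      ∑ T ∈ S.powersetCard k, ∑ T' ∈ S.powersetCard k,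
        (if R ⊆ T then 1 else 0) * (if R ⊆ T' then 1 else 0)
      = ((S.card - s).choose (k - s))^2 := by
    intro R hR
    rw [Finset.mem_powersetCard] at hR
    have h1 : (∑ T ∈ S.powersetCard k, if R ⊆ T then 1 else 0)
        = ((S.powersetCard k).filter (fun T => R ⊆ T)).card := (Finset.card_filter _ _).symm
    rw [Finset.sum_congr rfl fun T (_ : T ∈ S.powersetCard k) => (Finset.mul_sum _ _ _).symm]
    rw [← Finset.sum_mul, h1, aux_card_superset R hR.1 hR.2, sq]
  rw [Finset.sum_congr rfl hper, Finset.sum_const, Finset.card_powersetCard, smul_eq_mul]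

lemma aux_cpow (c : ℝ) (j k : ℕ) (hjk : j ≤ k) :
    c ^ j - 1 = ∑ i ∈ Finset.range k, (j.choose (i+1) : ℝ) * (c-1)^(i+1) := by
  have h1 : c ^ j = ∑ i ∈ Finset.range (j+1), (c-1)^i * (j.choose i : ℝ) := by
    have h := add_pow (c-1) 1 j
    simp only [one_pow, mul_one] at h
    calc c ^ j = ((c-1)+1)^j := by ring_nf
      _ = _ := by rw [h]
  have h2 : c ^ j = ∑ i ∈ Finset.range (k+1), (c-1)^i * (j.choose i : ℝ) := by
    rw [h1]
    refine Finset.sum_subset (by intro i hi; simp at hi ⊢; omega) ?_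
    intro i _ hi
    simp only [Finset.mem_range, not_lt] at hi
    rw [Nat.choose_eq_zero_of_lt (by omega)]
    simp
  rw [h2, Finset.sum_range_succ']
  simp only [pow_zero, Nat.choose_zero_right, Nat.cast_one, one_mul, mul_one]
  rw [add_sub_cancel_right]
  exact Finset.sum_congr rfl fun i _ => by ring

lemma aux_exp (t t0 : ℝ) (ht : 0 ≤ t) (htt0 : t ≤ t0) (k : ℕ) :
    ∑ i ∈ Finset.range k, t^(i+1) / ((i+1).factorial : ℝ) ≤ t * Real.exp t0 := by
  have h1 : ∀ i ∈ Finset.range k, t^(i+1) / ((i+1).factorial : ℝ)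
      ≤ t * (t^i / (i.factorial : ℝ)) := by
    intro i _
    have hfac : (i.factorial : ℝ) ≤ ((i+1).factorial : ℝ) := by
      exact_mod_cast Nat.factorial_le (Nat.le_succ i)
    have hfpos : (0:ℝ) < (i.factorial : ℝ) := by
      exact_mod_cast Nat.factorial_pos i
    calc t^(i+1) / ((i+1).factorial : ℝ) ≤ t^(i+1) / (i.factorial : ℝ) := by
          gcongr
      _ = t * (t^i / (i.factorial : ℝ)) := by rw [pow_succ]; ring
  refine le_trans (Finset.sum_le_sum h1) ?_
  rw [← Finset.mul_sum]
  have h2 : ∑ i ∈ Finset.range k, t^i / (i.factorial : ℝ) ≤ Real.exp t0 :=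
    le_trans (Real.sum_le_exp_of_nonneg ht k) (Real.exp_le_exp.mpr htt0)
  exact mul_le_mul_of_nonneg_left h2 ht

lemma aux_binom (m k s : ℕ) (hk1 : 1 ≤ k) (hsk : s ≤ k) (hm1 : 1 ≤ m)
    (hk2m : (k:ℝ)^2 ≤ m) :
    (m.choose s : ℝ) * ((m - s).choose (k-s) : ℝ)^2
      ≤ (m.choose k : ℝ)^2 * ((2*(k:ℝ)^2/m)^s / (s.factorial : ℝ)) := by
  have hmR : (0:ℝ) < (m:ℝ) := by exact_mod_cast hm1
  have hkm : k ≤ m := by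
    have : (k:ℝ) ≤ (m:ℝ) := by nlinarith [show (1:ℝ) ≤ (k:ℝ) from by exact_mod_cast hk1]
    exact_mod_cast this
  have hsm : s ≤ m := hsk.trans hkm
  have hms : (0:ℝ) < (m.choose s : ℝ) := by exact_mod_cast Nat.choose_pos hsm
  have hF : (0:ℝ) < (s.factorial : ℝ) := by exact_mod_cast Nat.factorial_pos s
  have hid : (m.choose k : ℝ) * (k.choose s : ℝ)
      = (m.choose s : ℝ) * ((m-s).choose (k-s) : ℝ) := by
    exact_mod_cast congrArg (Nat.cast (R := ℝ)) (Nat.choose_mul (n := m) hsk)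
  have hb1 : (k.choose s : ℝ) * (s.factorial : ℝ) ≤ (k:ℝ)^s := by
    have h := Nat.descFactorial_le_pow k s
    have h2 : k.descFactorial s = s.factorial * k.choose s :=
      Nat.descFactorial_eq_factorial_mul_choose k s
    have h3 : (s.factorial * k.choose s : ℕ) ≤ k ^ s := h2 ▸ h
    calc (k.choose s : ℝ) * (s.factorial : ℝ)
        = ((s.factorial * k.choose s : ℕ) : ℝ) := by push_cast; ring
      _ ≤ ((k ^ s : ℕ) : ℝ) := by exact_mod_cast h3
      _ = (k:ℝ)^s := by push_cast; ring
  have hb2 : ((m:ℝ)/2)^s ≤ (m.choose s : ℝ) * (s.factorial : ℝ) := by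
    have h := Nat.pow_sub_le_descFactorial m s
    have h2 : m.descFactorial s = s.factorial * m.choose s :=
      Nat.descFactorial_eq_factorial_mul_choose m s
    have h3 : ((m + 1 - s : ℕ) : ℝ) ^ s ≤ (m.choose s : ℝ) * (s.factorial : ℝ) := by
      calc ((m + 1 - s : ℕ) : ℝ) ^ s = (((m + 1 - s)^s : ℕ) : ℝ) := by push_cast; ring
        _ ≤ ((m.descFactorial s : ℕ) : ℝ) := by exact_mod_cast h
        _ = (m.choose s : ℝ) * (s.factorial : ℝ) := by rw [h2]; push_cast; ring
    refine le_trans ?_ h3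
    have hcast : ((m + 1 - s : ℕ) : ℝ) = (m:ℝ) + 1 - s := by
      have hs1 : s ≤ m + 1 := by omega
      push_cast [Nat.cast_sub hs1]
      ring
    rw [hcast]
    have hsR : (s:ℝ) ≤ (k:ℝ) := by exact_mod_cast hsk
    have hk2 : (k:ℝ) ≤ (m:ℝ)/2 + 1 := by
      nlinarith [show (1:ℝ) ≤ (k:ℝ) from by exact_mod_cast hk1]
    have hfin : (m:ℝ)/2 ≤ (m:ℝ) + 1 - s := by linarith
    exact pow_le_pow_left₀ (by positivity) hfin s
  have hcore : (k.choose s : ℝ)^2 * (s.factorial : ℝ) * ((m:ℝ)/2)^s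
      ≤ (m.choose s : ℝ) * (k:ℝ)^(2*s) := by
    calc (k.choose s : ℝ)^2 * (s.factorial : ℝ) * ((m:ℝ)/2)^s
        ≤ (k.choose s : ℝ)^2 * (s.factorial : ℝ) * ((m.choose s : ℝ) * (s.factorial : ℝ)) := by
          have h0 : (0:ℝ) ≤ (k.choose s : ℝ)^2 * (s.factorial : ℝ) := by positivity
          exact mul_le_mul_of_nonneg_left hb2 h0
      _ = ((k.choose s : ℝ) * (s.factorial : ℝ))^2 * (m.choose s : ℝ) := by ring
      _ ≤ ((k:ℝ)^s)^2 * (m.choose s : ℝ) := by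
          have h0 : (0:ℝ) ≤ (k.choose s : ℝ) * (s.factorial : ℝ) := by positivity
          have hmm := mul_le_mul hb1 hb1 h0 (by positivity)
          rw [← sq, ← sq] at hmm
          exact mul_le_mul_of_nonneg_right hmm (by positivity)
      _ = (m.choose s : ℝ) * (k:ℝ)^(2*s) := by rw [← pow_mul]; ring_nf
  have hXY : ((m-s).choose (k-s) : ℝ)
      = (m.choose k : ℝ) * (k.choose s : ℝ) / (m.choose s : ℝ) := by
    field_simp
    linarith [hid]
  have key : (k.choose s : ℝ)^2 / (m.choose s : ℝ)
      ≤ (2*(k:ℝ)^2/m)^s / (s.factorial : ℝ) := by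
    rw [div_le_div_iff₀ hms hF]
    have hhalf : (0:ℝ) < ((m:ℝ)/2)^s := by positivity
    rw [← mul_le_mul_iff_of_pos_right hhalf]
    calc (k.choose s : ℝ)^2 * (s.factorial : ℝ) * ((m:ℝ)/2)^s
        ≤ (m.choose s : ℝ) * (k:ℝ)^(2*s) := hcore
      _ = (2*(k:ℝ)^2/m)^s * (m.choose s : ℝ) * ((m:ℝ)/2)^s := by
          have hme : (2*(k:ℝ)^2/m) * ((m:ℝ)/2) = (k:ℝ)^2 := by
            field_simp
          have h2 : (2*(k:ℝ)^2/m)^s * ((m:ℝ)/2)^s = (k:ℝ)^(2*s) := by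
            rw [← mul_pow, hme, ← pow_mul]
          calc (m.choose s : ℝ) * (k:ℝ)^(2*s)
              = (m.choose s : ℝ) * ((2*(k:ℝ)^2/m)^s * ((m:ℝ)/2)^s) := by rw [h2]
            _ = _ := by ring
  have hfin : (m.choose s : ℝ) * ((m.choose k : ℝ) * (k.choose s : ℝ) / (m.choose s : ℝ))^2
      = (m.choose k : ℝ)^2 * ((k.choose s : ℝ)^2 / (m.choose s : ℝ)) := by
    field_simp
  rw [hXY, hfin]
  exact mul_le_mul_of_nonneg_left key (by positivity)

set_option maxHeartbeats 2000000 in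
open Classical in
/-- Let `(Σ, μ)` be a finite probability space. For `T ⊆ [n]` let
`E_T = {x : x is constant on T}`. There is a constant `C` (depending only on `μ`) such
that for every `n`, `S ⊆ [n]` and integer `1 ≤ k ≤ √|S|`, the distribution `ν` obtained by
picking a uniformly random `T ⊆ S` with `|T| = k` and then sampling `x ∼ μ^{⊗n} | E_T`
satisfies `‖ν - μ^{⊗n}‖₁ ≤ C·k/√|S|`. -/
theorem force_equality_on_random_small_set_close
    {Sig : Type*} [Fintype Sig] (μ : Sig → ℝ)
    (hμ0 : ∀ a, 0 ≤ μ a) (hμ1 : ∑ a, μ a = 1) :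
    ∃ C : ℝ, ∀ (n : ℕ) (S : Finset (Fin n)) (k : ℕ),
      1 ≤ k → (k : ℝ) ≤ Real.sqrt S.card →
      ∑ x : Fin n → Sig,
        |(1 / ((S.powersetCard k).card : ℝ)) *
            ∑ T ∈ S.powersetCard k,
              (if ∀ i ∈ T, ∀ j ∈ T, x i = x j then ∏ i, μ (x i) else 0) /
                (∑ y ∈ Finset.univ.filter
                    (fun y : Fin n → Sig => ∀ i ∈ T, ∀ j ∈ T, y i = y j),
                  ∏ i, μ (y i))
          - ∏ i, μ (x i)|
        ≤ C * k / Real.sqrt S.card := by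
  classical
  obtain ⟨a0, ha0⟩ : ∃ a, 0 < μ a := by
    by_contra h
    push_neg at h
    have : ∑ a, μ a ≤ 0 := Finset.sum_nonpos fun a _ => h a
    linarith
  set V : Finset Sig := Finset.univ.filter (fun a => 0 < μ a) with hV
  have hVne : (V.image μ).Nonempty :=
    ⟨μ a0, Finset.mem_image_of_mem μ (by simp [hV, ha0])⟩
  set ε : ℝ := (V.image μ).min' hVne with hεdef
  have hεmem : ε ∈ V.image μ := Finset.min'_mem _ _
  have hε0 : 0 < ε := by
    obtain ⟨a, ha, hav⟩ := Finset.mem_image.mp hεmem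
    rw [hV, Finset.mem_filter] at ha
    rw [← hav]; exact ha.2
  have hεle : ∀ a, 0 < μ a → ε ≤ μ a := fun a ha =>
    Finset.min'_le _ _ (Finset.mem_image_of_mem μ (by simp [hV, ha]))
  have hε1 : ε ≤ 1 := by
    obtain ⟨a, ha, hav⟩ := Finset.mem_image.mp hεmem
    rw [← hav, ← hμ1]
    exact Finset.single_le_sum (fun b _ => hμ0 b) (Finset.mem_univ a)
  set c : ℝ := 1 / ε with hcdef
  have hc1 : 1 ≤ c := (le_div_iff₀ hε0).mpr (by linarith)
  set d : ℝ := c - 1 with hddef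
  have hd0 : 0 ≤ d := by simp [hddef]; linarith
  refine ⟨Real.sqrt (2 * d * Real.exp (2 * d)), fun n S k hk1 hkS => ?_⟩
  set m : ℕ := S.card with hm
  have hm0R : (0:ℝ) < m := by
    by_contra h
    push_neg at h
    have hz : (m:ℝ) = 0 := le_antisymm h (Nat.cast_nonneg m)
    rw [hz, Real.sqrt_zero] at hkS
    have : (1:ℝ) ≤ (k:ℝ) := by exact_mod_cast hk1
    linarith
  have hm1 : 1 ≤ m := by
    have : 0 < m := by exact_mod_cast hm0R
    omega
  have hk2m : (k:ℝ)^2 ≤ m := by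
    have h := Real.sq_sqrt (le_of_lt hm0R)
    nlinarith [Real.sqrt_nonneg (m:ℝ)]
  have hkm : k ≤ m := by
    have : (k:ℝ) ≤ (m:ℝ) := by nlinarith [show (1:ℝ) ≤ (k:ℝ) from by exact_mod_cast hk1]
    exact_mod_cast this
  set P : Finset (Finset (Fin n)) := S.powersetCard k with hP
  set N : ℕ := P.card with hN
  have hNchoose : N = m.choose k := by rw [hN, hP, Finset.card_powersetCard, hm]
  have hNpos : 0 < N := by rw [hNchoose]; exact Nat.choose_pos hkm
  have hNR : (0:ℝ) < (N:ℝ) := by exact_mod_cast hNpos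
  set p : ℝ := ∑ a, μ a ^ k with hp
  have hppos : 0 < p := by
    rw [hp]
    exact Finset.sum_pos' (fun a _ => pow_nonneg (hμ0 a) k)
      ⟨a0, Finset.mem_univ a0, pow_pos ha0 k⟩
  set w : (Fin n → Sig) → ℝ := fun x => ∏ i, μ (x i) with hw
  have hw0 : ∀ x, 0 ≤ w x := fun x => Finset.prod_nonneg fun i _ => hμ0 (x i)
  have hsumw : ∑ x : Fin n → Sig, w x = 1 := by
    simp only [hw]
    rw [aux_sum_prod (fun _ a => μ a)]
    simp [hμ1]
  set χ : Finset (Fin n) → (Fin n → Sig) → ℝ :=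
    fun T x => if ∀ i ∈ T, ∀ j ∈ T, x i = x j then (1:ℝ) else 0 with hχ
  have hTfacts : ∀ T ∈ P, T.card = k ∧ T ⊆ S ∧ T.Nonempty := by
    intro T hT
    rw [hP, Finset.mem_powersetCard] at hT
    exact ⟨hT.2, hT.1, Finset.card_pos.mp (hT.2 ▸ hk1)⟩
  have hchigen : ∀ T0 : Finset (Fin n), T0.Nonempty →
      ∑ x : Fin n → Sig, χ T0 x * w x = ∑ a, μ a ^ T0.card := by
    intro T0 hne
    simp only [hχ, hw]
    rw [Finset.sum_congr rfl fun x (_ : x ∈ (Finset.univ : Finset (Fin n → Sig))) => by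
      rw [aux_ind T0 hne x, Finset.sum_mul]]
    rw [Finset.sum_comm]
    exact Finset.sum_congr rfl fun a _ => aux_single μ hμ1 T0 a
  have hchisum : ∀ T ∈ P, ∑ x : Fin n → Sig, χ T x * w x = p := by
    intro T hT
    obtain ⟨hcard, _, hne⟩ := hTfacts T hT
    rw [hchigen T hne, hcard, hp]
  have hdenom : ∀ T ∈ P,
      (∑ y ∈ Finset.univ.filter
        (fun y : Fin n → Sig => ∀ i ∈ T, ∀ j ∈ T, y i = y j), ∏ i, μ (y i)) = p := by
    intro T hT
    rw [Finset.sum_filter, ← hchisum T hT]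
    refine Finset.sum_congr rfl fun y _ => ?_
    simp only [hχ, hw]
    by_cases h : ∀ i ∈ T, ∀ j ∈ T, y i = y j
    · rw [if_pos h, if_pos h, one_mul]
    · rw [if_neg h, if_neg h, zero_mul]
  set g : (Fin n → Sig) → ℝ := fun x => (1/(N:ℝ)) * ∑ T ∈ P, (χ T x / p - 1) with hg
  have hrw : ∀ x : Fin n → Sig,
      (1 / ((S.powersetCard k).card : ℝ)) *
            (∑ T ∈ S.powersetCard k,
              (if ∀ i ∈ T, ∀ j ∈ T, x i = x j then ∏ i, μ (x i) else 0) /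
                (∑ y ∈ Finset.univ.filter
                    (fun y : Fin n → Sig => ∀ i ∈ T, ∀ j ∈ T, y i = y j),
                  ∏ i, μ (y i)))
          - ∏ i, μ (x i) = w x * g x := by
    intro x
    have h1 : ∀ T ∈ P, (if ∀ i ∈ T, ∀ j ∈ T, x i = x j then ∏ i, μ (x i) else 0) /
          (∑ y ∈ Finset.univ.filter
            (fun y : Fin n → Sig => ∀ i ∈ T, ∀ j ∈ T, y i = y j), ∏ i, μ (y i))
        = w x * (χ T x / p) := by
      intro T hT
      rw [hdenom T hT]
      simp only [hχ, hw]
      by_cases h : ∀ i ∈ T, ∀ j ∈ T, x i = x j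
      · rw [if_pos h, if_pos h, mul_one_div]
      · rw [if_neg h, if_neg h, zero_div, mul_zero]
    have hcardN : ((S.powersetCard k).card : ℝ) = (N:ℝ) := by rw [hN, hP]
    rw [hcardN, Finset.sum_congr rfl h1]
    simp only [hg]
    rw [← Finset.mul_sum, Finset.sum_sub_distrib, Finset.sum_const, nsmul_eq_mul, mul_one]
    have hwx : ∏ i, μ (x i) = w x := rfl
    rw [hwx]
    field_simp
    ring
  rw [Finset.sum_congr rfl fun x _ => by rw [hrw x, abs_mul, abs_of_nonneg (hw0 x)]]
  have hCS : ∑ x : Fin n → Sig, w x * |g x|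
      ≤ Real.sqrt (∑ x : Fin n → Sig, w x * g x ^ 2) := by
    have h0 : ∀ x : Fin n → Sig, w x * |g x|
        = Real.sqrt (w x) * Real.sqrt (w x * g x ^ 2) := by
      intro x
      rw [Real.sqrt_mul (hw0 x), Real.sqrt_sq_eq_abs, ← mul_assoc, Real.mul_self_sqrt (hw0 x)]
    rw [Finset.sum_congr rfl fun x _ => h0 x]
    refine le_trans (Real.sum_sqrt_mul_sqrt_le _ (fun x => hw0 x)
      (fun x => mul_nonneg (hw0 x) (sq_nonneg _))) ?_
    rw [hsumw, Real.sqrt_one, one_mul]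
  have hVar : ∑ x : Fin n → Sig, w x * g x ^ 2
      ≤ 2 * d * Real.exp (2 * d) * (k:ℝ) ^ 2 / m := by
    have hx : ∀ x : Fin n → Sig, w x * g x ^ 2
        = (1/(N:ℝ))^2 * ∑ T ∈ P, ∑ T' ∈ P,
            w x * ((χ T x / p - 1) * (χ T' x / p - 1)) := by
      intro x
      simp only [hg]
      calc w x * ((1/(N:ℝ)) * ∑ T ∈ P, (χ T x / p - 1))^2
          = (1/(N:ℝ))^2 * (w x * ((∑ T ∈ P, (χ T x / p - 1)) *
              (∑ T' ∈ P, (χ T' x / p - 1)))) := by ring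
        _ = (1/(N:ℝ))^2 * (w x * ∑ T ∈ P, ∑ T' ∈ P,
              (χ T x / p - 1) * (χ T' x / p - 1)) := by rw [Finset.sum_mul_sum]
        _ = (1/(N:ℝ))^2 * ∑ T ∈ P, ∑ T' ∈ P,
              w x * ((χ T x / p - 1) * (χ T' x / p - 1)) := by
            rw [Finset.mul_sum]
            congr 1
            exact Finset.sum_congr rfl fun T _ => by rw [Finset.mul_sum]
    have hexpand : ∑ x : Fin n → Sig, w x * g x ^ 2
        = (1/(N:ℝ))^2 * ∑ T ∈ P, ∑ T' ∈ P,
            ∑ x : Fin n → Sig, w x * ((χ T x / p - 1) * (χ T' x / p - 1)) := by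
      rw [Finset.sum_congr rfl fun x _ => hx x, ← Finset.mul_sum]
      congr 1
      rw [Finset.sum_comm]
      exact Finset.sum_congr rfl fun T _ => Finset.sum_comm
    have hpair : ∀ T ∈ P, ∀ T' ∈ P,
        ∑ x : Fin n → Sig, w x * ((χ T x / p - 1) * (χ T' x / p - 1))
          ≤ c ^ (T ∩ T').card - 1 := by
      intro T hT T' hT'
      obtain ⟨hcT, hsubT, hneT⟩ := hTfacts T hT
      obtain ⟨hcT', hsubT', hneT'⟩ := hTfacts T' hT'
      have hQle : ∑ x : Fin n → Sig, (χ T x * χ T' x) * w x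
          ≤ c ^ (T ∩ T').card * p^2 := by
        by_cases hint : (T ∩ T').Nonempty
        · have huj : (T ∪ T').card + (T ∩ T').card = k + k := by
            rw [Finset.card_union_add_card_inter, hcT, hcT']
          have hjk : (T ∩ T').card ≤ k := by
            rw [← hcT]; exact Finset.card_le_card Finset.inter_subset_left
          have hneU : (T ∪ T').Nonempty :=
            ⟨hneT.choose, Finset.mem_union_left _ hneT.choose_spec⟩
          have hcc : ∀ x : Fin n → Sig, χ T x * χ T' x = χ (T ∪ T') x := by
            intro x
            simp only [hχ]
            by_cases h1 : ∀ i ∈ T, ∀ j ∈ T, x i = x j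
            · by_cases h2 : ∀ i ∈ T', ∀ j ∈ T', x i = x j
              · rw [if_pos h1, if_pos h2, one_mul,
                  if_pos ((aux_union T T' hint x).mp ⟨h1, h2⟩)]
              · rw [if_neg h2, mul_zero,
                  if_neg (fun hcon => h2 ((aux_union T T' hint x).mpr hcon).2)]
            · rw [if_neg h1, zero_mul,
                if_neg (fun hcon => h1 ((aux_union T T' hint x).mpr hcon).1)]
          have hQeq : ∑ x : Fin n → Sig, (χ T x * χ T' x) * w x
              = ∑ a, μ a ^ (T ∪ T').card := by
            rw [Finset.sum_congr rfl fun x _ => by rw [hcc x]]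
            exact hchigen (T ∪ T') hneU
          have hterm : ∀ a, μ a ^ (T ∪ T').card
              ≤ c ^ (T ∩ T').card * (μ a ^ k * p) := by
            intro a
            rcases eq_or_lt_of_le (hμ0 a) with h0 | h0
            · have hU1 : 1 ≤ (T ∪ T').card := by omega
              rw [← h0, zero_pow (by omega), zero_pow (by omega : k ≠ 0)]
              simp
            · have hεa := hεle a h0
              have hupow : (T ∪ T').card = k + (k - (T ∩ T').card) := by omega
              rw [hupow, pow_add]
              have hstep : μ a ^ (k - (T ∩ T').card) ≤ c ^ (T ∩ T').card * p := by
                have h1 : μ a ^ (k - (T ∩ T').card) * ε ^ (T ∩ T').card ≤ p := by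
                  calc μ a ^ (k - (T ∩ T').card) * ε ^ (T ∩ T').card
                      ≤ μ a ^ (k - (T ∩ T').card) * μ a ^ (T ∩ T').card := by
                        refine mul_le_mul_of_nonneg_left ?_ (pow_nonneg h0.le _)
                        exact pow_le_pow_left₀ hε0.le hεa _
                    _ = μ a ^ k := by rw [← pow_add]; congr 1; omega
                    _ ≤ p := by
                        rw [hp]
                        exact Finset.single_le_sum
                          (fun b _ => pow_nonneg (hμ0 b) k) (Finset.mem_univ a)
                have hεpow : (0:ℝ) < ε ^ (T ∩ T').card := pow_pos hε0 _
                rw [hcdef, div_pow, one_pow]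
                rw [div_mul_eq_mul_div, le_div_iff₀ hεpow, one_mul]
                linarith [h1]
              calc μ a ^ k * μ a ^ (k - (T ∩ T').card)
                  ≤ μ a ^ k * (c ^ (T ∩ T').card * p) :=
                    mul_le_mul_of_nonneg_left hstep (pow_nonneg h0.le k)
                _ = c ^ (T ∩ T').card * (μ a ^ k * p) := by ring
          calc ∑ x : Fin n → Sig, (χ T x * χ T' x) * w x
              = ∑ a, μ a ^ (T ∪ T').card := hQeq
            _ ≤ ∑ a, c ^ (T ∩ T').card * (μ a ^ k * p) :=
                Finset.sum_le_sum fun a _ => hterm a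
            _ = c ^ (T ∩ T').card * p^2 := by
                rw [← Finset.mul_sum, ← Finset.sum_mul, ← hp, sq]
        · have hdisj : Disjoint T T' := by
            rw [Finset.disjoint_iff_inter_eq_empty]
            exact Finset.not_nonempty_iff_eq_empty.mp hint
          have hj0 : (T ∩ T').card = 0 := by
            rw [Finset.not_nonempty_iff_eq_empty.mp hint, Finset.card_empty]
          have hcc : ∀ x : Fin n → Sig, (χ T x * χ T' x) * w x
              = ∑ a, ∑ b, (if ∀ i ∈ T, x i = a then (1:ℝ) else 0) *
                  ((if ∀ i ∈ T', x i = b then (1:ℝ) else 0) * ∏ i, μ (x i)) := by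
            intro x
            simp only [hχ, hw]
            rw [aux_ind T hneT x, aux_ind T' hneT' x, Finset.sum_mul_sum, Finset.sum_mul]
            refine Finset.sum_congr rfl fun a _ => ?_
            rw [Finset.sum_mul]
            exact Finset.sum_congr rfl fun b _ => by ring
          have hQeq : ∑ x : Fin n → Sig, (χ T x * χ T' x) * w x = p * p := by
            rw [Finset.sum_congr rfl fun x _ => hcc x]
            rw [Finset.sum_comm]
            rw [Finset.sum_congr rfl fun a (_ : a ∈ (Finset.univ : Finset Sig)) =>
              Finset.sum_comm]
            rw [Finset.sum_congr rfl fun a (_ : a ∈ (Finset.univ : Finset Sig)) =>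
              Finset.sum_congr rfl fun b _ => aux_pinned μ hμ1 T T' hdisj a b]
            rw [hcT, hcT', ← Finset.sum_mul_sum]
          rw [hQeq, hj0, pow_zero, one_mul, sq]
      have hVeq : ∑ x : Fin n → Sig, w x * ((χ T x / p - 1) * (χ T' x / p - 1))
          = (∑ x : Fin n → Sig, (χ T x * χ T' x) * w x) / p^2 - 1 := by
        have hpt : ∀ x : Fin n → Sig, w x * ((χ T x / p - 1) * (χ T' x / p - 1))
            = (χ T x * χ T' x) * w x / p^2 - (χ T x * w x) / p
              - (χ T' x * w x) / p + w x := by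
          intro x
          field_simp
          ring
        rw [Finset.sum_congr rfl fun x _ => hpt x]
        rw [Finset.sum_add_distrib, Finset.sum_sub_distrib, Finset.sum_sub_distrib,
          ← Finset.sum_div, ← Finset.sum_div, ← Finset.sum_div,
          hchisum T hT, hchisum T' hT', hsumw, div_self (ne_of_gt hppos)]
        ring
      rw [hVeq]
      have h2 : (∑ x : Fin n → Sig, (χ T x * χ T' x) * w x) / p^2
          ≤ c ^ (T ∩ T').card := by
        rw [div_le_iff₀ (by positivity : (0:ℝ) < p^2)]
        exact hQle
      linarith
    have hstep2 : ∀ T ∈ P, ∀ T' ∈ P, c ^ (T ∩ T').card - 1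
        = ∑ i ∈ Finset.range k, ((T ∩ T').card.choose (i+1) : ℝ) * d^(i+1) := by
      intro T hT T' hT'
      have hjk : (T ∩ T').card ≤ k := by
        rw [← (hTfacts T hT).1]; exact Finset.card_le_card Finset.inter_subset_left
      rw [aux_cpow c (T ∩ T').card k hjk]
    have hstep3 : ∑ T ∈ P, ∑ T' ∈ P, (c ^ (T ∩ T').card - 1)
        = ∑ i ∈ Finset.range k, d^(i+1) *
            ((m.choose (i+1) : ℝ) * ((m - (i+1)).choose (k - (i+1)) : ℝ)^2) := by
      rw [Finset.sum_congr rfl fun T hT => Finset.sum_congr rfl fun T' hT' =>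
        hstep2 T hT T' hT']
      rw [Finset.sum_congr rfl fun T (_ : T ∈ P) => Finset.sum_comm, Finset.sum_comm]
      refine Finset.sum_congr rfl fun i hi => ?_
      have hsk : i + 1 ≤ k := Finset.mem_range.mp hi
      have hc := aux_count S k (i+1) hsk
      have hcR : ∑ T ∈ P, ∑ T' ∈ P, ((T ∩ T').card.choose (i+1) : ℝ)
          = (m.choose (i+1) : ℝ) * ((m - (i+1)).choose (k - (i+1)) : ℝ)^2 := by
        rw [hP, hm]
        have := congrArg (Nat.cast (R := ℝ)) hc
        push_cast at this ⊢
        exact this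
      calc ∑ T ∈ P, ∑ T' ∈ P, ((T ∩ T').card.choose (i+1) : ℝ) * d^(i+1)
          = (∑ T ∈ P, ∑ T' ∈ P, ((T ∩ T').card.choose (i+1) : ℝ)) * d^(i+1) := by
            rw [Finset.sum_mul]
            exact Finset.sum_congr rfl fun T _ => (Finset.sum_mul _ _ _).symm
        _ = d^(i+1) * ((m.choose (i+1) : ℝ) * ((m - (i+1)).choose (k - (i+1)) : ℝ)^2) := by
            rw [hcR]; ring
    calc ∑ x : Fin n → Sig, w x * g x ^ 2
        = (1/(N:ℝ))^2 * ∑ T ∈ P, ∑ T' ∈ P,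
            ∑ x : Fin n → Sig, w x * ((χ T x / p - 1) * (χ T' x / p - 1)) := hexpand
      _ ≤ (1/(N:ℝ))^2 * ∑ T ∈ P, ∑ T' ∈ P, (c ^ (T ∩ T').card - 1) := by
          refine mul_le_mul_of_nonneg_left ?_ (by positivity)
          exact Finset.sum_le_sum fun T hT => Finset.sum_le_sum fun T' hT' =>
            hpair T hT T' hT'
      _ = (1/(N:ℝ))^2 * ∑ i ∈ Finset.range k, d^(i+1) *
            ((m.choose (i+1) : ℝ) * ((m - (i+1)).choose (k - (i+1)) : ℝ)^2) := by
          rw [hstep3]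
      _ ≤ (1/(N:ℝ))^2 * ∑ i ∈ Finset.range k, d^(i+1) *
            ((m.choose k : ℝ)^2 * ((2*(k:ℝ)^2/m)^(i+1) / ((i+1).factorial : ℝ))) := by
          refine mul_le_mul_of_nonneg_left ?_ (by positivity)
          refine Finset.sum_le_sum fun i hi => ?_
          refine mul_le_mul_of_nonneg_left ?_ (pow_nonneg hd0 _)
          exact aux_binom m k (i+1) hk1 (Finset.mem_range.mp hi) hm1 hk2m
      _ = ∑ i ∈ Finset.range k, (2*d*(k:ℝ)^2/m)^(i+1) / ((i+1).factorial : ℝ) := by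
          rw [Finset.mul_sum]
          refine Finset.sum_congr rfl fun i _ => ?_
          have hnn : ((m.choose k : ℕ):ℝ) ≠ 0 :=
            ne_of_gt (by exact_mod_cast Nat.choose_pos hkm)
          have hsplit : (2*d*(k:ℝ)^2/(m:ℝ))^(i+1)
              = d^(i+1) * (2*(k:ℝ)^2/(m:ℝ))^(i+1) := by
            rw [← mul_pow]; congr 1; ring
          rw [hNchoose, hsplit]
          field_simp
      _ ≤ (2*d*(k:ℝ)^2/m) * Real.exp (2*d) := by
          refine aux_exp _ _ ?_ ?_ k
          · have : (0:ℝ) ≤ 2*d*(k:ℝ)^2 := by positivity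
            exact div_nonneg this hm0R.le
          · have hk2m' : (k:ℝ)^2/m ≤ 1 := (div_le_one hm0R).mpr hk2m
            calc 2*d*(k:ℝ)^2/m = 2*d*((k:ℝ)^2/m) := by ring
              _ ≤ 2*d*1 := by
                  refine mul_le_mul_of_nonneg_left hk2m' (by linarith)
              _ = 2*d := by ring
      _ = 2 * d * Real.exp (2 * d) * (k:ℝ) ^ 2 / m := by ring
  refine le_trans hCS (le_trans (Real.sqrt_le_sqrt hVar) (le_of_eq ?_))
  have h1 : 2 * d * Real.exp (2 * d) * (k:ℝ) ^ 2 / (m:ℝ)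
      = (2 * d * Real.exp (2 * d)) * ((k:ℝ) ^ 2 / (m:ℝ)) := by ring
  rw [h1, Real.sqrt_mul (by positivity), Real.sqrt_div (by positivity) _,
    Real.sqrt_sq (by positivity)]
  rw [hm]
  ring
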